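/- Let ω > 0 with ω ≠ 1, γ = 1/(1−ω²), σ ∈ ℝ, and fix t₀ ∈ ℝ. For v₀ > 0 let t₁(v₀) be the time of the next impact (the first t > t₀ with x(t; t₀, v₀) = σ) and let v₁(v₀) = x'(t₁(v₀); t₀, v₀) be the incoming velocity at that impact, where x(t; t₀, v₀) = (σ − γ·cos(ωt₀))·cos(t−t₀) + (−v₀ + ωγ·sin(ωt₀))·sin(t−t₀) + γ·cos(ωt). Then as v₀ → ∞, v₁(v₀) − v₀ → f(t₀), where f(t) = −ωγ·(sin(ωt) + sin(ω(t+π))). In particular the velocity change per impact is bounded at high velocities. -/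

import Mathlib

open Real

private lemma abs_sin_sub_sin_le' (a b : ℝ) : |Real.sin a - Real.sin b| ≤ |a - b| := by
  rw [Real.sin_sub_sin, abs_mul, abs_mul]
  have h1 : |Real.sin ((a - b) / 2)| ≤ |(a - b) / 2| := Real.abs_sin_le_abs
  have h2 : |Real.cos ((a + b) / 2)| ≤ 1 := Real.abs_cos_le_one _
  have h4 : |(a - b) / 2| = |a - b| / 2 := by rw [abs_div]; norm_num
  have h5 : |(2:ℝ)| = 2 := by norm_num
  rw [h5]
  nlinarith [abs_nonneg (Real.sin ((a - b) / 2)), abs_nonneg (Real.cos ((a + b) / 2)),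
    abs_nonneg (a - b)]

private lemma abs_cos_sub_cos_le' (a b : ℝ) : |Real.cos a - Real.cos b| ≤ |a - b| := by
  rw [Real.cos_sub_cos, abs_mul, abs_mul]
  have h1 : |Real.sin ((a - b) / 2)| ≤ |(a - b) / 2| := Real.abs_sin_le_abs
  have h2 : |Real.sin ((a + b) / 2)| ≤ 1 := Real.abs_sin_le_one _
  have h4 : |(a - b) / 2| = |a - b| / 2 := by rw [abs_div]; norm_num
  have h5 : |(-2:ℝ)| = 2 := by norm_num
  rw [h5]
  nlinarith [abs_nonneg (Real.sin ((a - b) / 2)), abs_nonneg (Real.sin ((a + b) / 2)),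
    abs_nonneg (a - b)]

private lemma abs_le_pi_div_two_mul_abs_sin' {s : ℝ} (hs : |s| ≤ π / 2) :
    |s| ≤ π / 2 * |Real.sin s| := by
  have h1 : 2 / π * |s| ≤ Real.sin |s| := Real.mul_le_sin (abs_nonneg s) hs
  have h2 : Real.sin |s| ≤ |Real.sin s| := by
    rcases abs_choice s with h | h
    · rw [h]; exact le_abs_self _
    · rw [h, Real.sin_neg]; exact neg_le_abs _
  have hπ : (0:ℝ) < π := Real.pi_pos
  have key : π / 2 * (2 / π * |s|) = |s| := by field_simp
  calc |s| = π / 2 * (2 / π * |s|) := key.symm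
    _ ≤ π / 2 * |Real.sin s| := by
        apply mul_le_mul_of_nonneg_left (h1.trans h2); positivity

set_option maxHeartbeats 2000000

/-- High-velocity asymptotics of the velocity change at an impact: if `t₁(v₀)` is
the next impact time and `v₁(v₀) = x'(t₁(v₀))` the incoming velocity there, then
`v₁(v₀) - v₀ → f(t₀)` as `v₀ → ∞`, where
`f(t) = -ωγ (sin (ωt) + sin (ω(t + π)))`. -/
theorem impact_oscillator_velocity_change_asymptotics
    (ω σ γ t₀ : ℝ) (hω : 0 < ω) (hω1 : ω ≠ 1) (hγ : γ = 1 / (1 - ω ^ 2))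
    (x xd : ℝ → ℝ → ℝ)
    (hx : ∀ v₀ t, x v₀ t = (σ - γ * Real.cos (ω * t₀)) * Real.cos (t - t₀) +
      (-v₀ + ω * γ * Real.sin (ω * t₀)) * Real.sin (t - t₀) + γ * Real.cos (ω * t))
    (hxd : ∀ v₀ t, HasDerivAt (x v₀) (xd v₀ t) t)
    (t₁ : ℝ → ℝ)
    (ht₁ : ∀ v₀, t₁ v₀ = sInf {t : ℝ | t₀ < t ∧ x v₀ t = σ})
    (f : ℝ → ℝ)
    (hf : ∀ t, f t = -(ω * γ) * (Real.sin (ω * t) + Real.sin (ω * (t + π)))) :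
    Filter.Tendsto (fun v₀ => xd v₀ (t₁ v₀) - v₀) Filter.atTop (nhds (f t₀)) := by
  have hπ3 : (3:ℝ) < π := Real.pi_gt_three
  have hπ4 : π ≤ 4 := Real.pi_le_four
  have hxfun : ∀ v₀, x v₀ = fun t => (σ - γ * Real.cos (ω * t₀)) * Real.cos (t - t₀) +
      (-v₀ + ω * γ * Real.sin (ω * t₀)) * Real.sin (t - t₀) + γ * Real.cos (ω * t) :=
    fun v₀ => funext (hx v₀)
  have hcont : ∀ v₀, Continuous (x v₀) := by
    intro v₀; rw [hxfun v₀]; fun_prop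
  have hxdEq : ∀ v₀ t, xd v₀ t =
      -((σ - γ * Real.cos (ω * t₀)) * Real.sin (t - t₀)) +
      (-v₀ + ω * γ * Real.sin (ω * t₀)) * Real.cos (t - t₀) - ω * γ * Real.sin (ω * t) := by
    intro v₀ t
    have h1 : HasDerivAt (fun u : ℝ => u - t₀) 1 t := (hasDerivAt_id t).sub_const t₀
    have h2 : HasDerivAt (fun u : ℝ => Real.cos (u - t₀)) (-Real.sin (t - t₀)) t := by
      simpa [Function.comp_def] using (Real.hasDerivAt_cos (t - t₀)).comp t h1
    have h3 : HasDerivAt (fun u : ℝ => Real.sin (u - t₀)) (Real.cos (t - t₀)) t := by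
      simpa [Function.comp_def] using (Real.hasDerivAt_sin (t - t₀)).comp t h1
    have h4 : HasDerivAt (fun u : ℝ => ω * u) ω t := by
      simpa using (hasDerivAt_id t).const_mul ω
    have h5 : HasDerivAt (fun u : ℝ => Real.cos (ω * u)) (-Real.sin (ω * t) * ω) t :=
      (Real.hasDerivAt_cos (ω * t)).comp t h4
    have h6 : HasDerivAt (x v₀)
        ((σ - γ * Real.cos (ω * t₀)) * -Real.sin (t - t₀) +
         (-v₀ + ω * γ * Real.sin (ω * t₀)) * Real.cos (t - t₀) +
         γ * (-Real.sin (ω * t) * ω)) t := by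
      rw [hxfun v₀]
      exact ((h2.const_mul _).add (h3.const_mul _)).add (h5.const_mul γ)
    rw [(hxd v₀ t).unique h6]; ring
  obtain ⟨A, hAdef⟩ : ∃ A : ℝ, A = σ - γ * Real.cos (ω * t₀) := ⟨_, rfl⟩
  obtain ⟨D, hDdef⟩ : ∃ D : ℝ, D = ω * γ * Real.sin (ω * t₀) := ⟨_, rfl⟩
  obtain ⟨c, hcdef⟩ : ∃ c : ℝ, c = ω * |γ| := ⟨_, rfl⟩
  rw [← hAdef, ← hDdef] at hx hxfun hxdEq
  have hc0 : 0 ≤ c := hcdef ▸ mul_nonneg hω.le (abs_nonneg γ)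
  have hD : |D| ≤ c := by
    rw [hDdef, hcdef, abs_mul, abs_mul, abs_of_pos hω]
    have h1 := Real.abs_sin_le_one (ω * t₀)
    nlinarith [abs_nonneg γ]
  obtain ⟨X, hXdef⟩ : ∃ X : ℝ, X = |A| + |γ| + |σ| := ⟨_, rfl⟩
  have hX0 : 0 ≤ X := by rw [hXdef]; positivity
  have hXω : X * ω = |A| * ω + |γ| * ω + |σ| * ω := by rw [hXdef]; ring
  obtain ⟨V, hVdef⟩ : ∃ V : ℝ, V = 3 * c + 9 + 9 * X * (1 + ω) := ⟨_, rfl⟩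
  have hvc : ∀ v₀ : ℝ, V ≤ v₀ →
      9 + 9 * X * (1 + ω) ≤ v₀ - c ∧ 0 < v₀ - c ∧ v₀ + c ≤ 2 * (v₀ - c) := by
    intro v₀ hv
    have hXω : 0 ≤ X * (1 + ω) := mul_nonneg hX0 (by linarith)
    rw [hVdef] at hv
    exact ⟨by nlinarith, by nlinarith, by nlinarith⟩
  -- negativity on (t₀, t₀ + π - 1/2]
  have hneg : ∀ v₀, V ≤ v₀ → ∀ t, t₀ < t → t ≤ t₀ + π - 1/2 → x v₀ t < σ := by
    intro v₀ hv t ht1 ht2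
    obtain ⟨hvc1, hvc2, _⟩ := hvc v₀ hv
    obtain ⟨s, hsdef⟩ : ∃ s : ℝ, s = t - t₀ := ⟨_, rfl⟩
    have hs0 : 0 < s := by rw [hsdef]; linarith
    have hs1 : s ≤ π - 1/2 := by rw [hsdef]; linarith
    have hxe : x v₀ t - σ = A * (Real.cos s - 1) + (-v₀ + D) * Real.sin s
        + γ * (Real.cos (ω * t) - Real.cos (ω * t₀)) := by
      rw [hx v₀ t, hAdef, hsdef]; ring
    have hsin0 : 0 ≤ Real.sin s :=
      Real.sin_nonneg_of_nonneg_of_le_pi hs0.le (by linarith)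
    have hb1 : A * (Real.cos s - 1) ≤ |A| * (1 - Real.cos s) := by
      have h := Real.cos_le_one s
      calc A * (Real.cos s - 1) ≤ |A * (Real.cos s - 1)| := le_abs_self _
        _ = |A| * (1 - Real.cos s) := by
            rw [abs_mul, abs_of_nonpos (show Real.cos s - 1 ≤ 0 by linarith)]; ring
    have hb3 : (-v₀ + D) * Real.sin s ≤ -((v₀ - c) * Real.sin s) := by
      have h := (abs_le.mp hD).2
      nlinarith [hsin0]
    rcases le_or_gt s (π/2) with hcase | hcase
    · -- small s
      have hj : 2/π * s ≤ Real.sin s := Real.mul_le_sin hs0.le hcase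
      have hπ0 : (0:ℝ) < π := by linarith
      have hhalf : s/2 ≤ 2/π * s := by
        rw [div_mul_eq_mul_div, div_le_div_iff₀ (by norm_num : (0:ℝ) < 2) hπ0]
        nlinarith [mul_le_mul_of_nonneg_left hπ4 hs0.le]
      have hsin' : s/2 ≤ Real.sin s := le_trans hhalf hj
      have hcos : 1 - Real.cos s ≤ s := by
        have h := Real.one_sub_sq_div_two_le_cos (x := s)
        nlinarith
      have hb2 : γ * (Real.cos (ω * t) - Real.cos (ω * t₀)) ≤ |γ| * (ω * s) := by
        calc γ * (Real.cos (ω * t) - Real.cos (ω * t₀))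
            ≤ |γ * (Real.cos (ω * t) - Real.cos (ω * t₀))| := le_abs_self _
          _ = |γ| * |Real.cos (ω * t) - Real.cos (ω * t₀)| := abs_mul _ _
          _ ≤ |γ| * |ω * t - ω * t₀| := by
              apply mul_le_mul_of_nonneg_left (abs_cos_sub_cos_le' _ _) (abs_nonneg γ)
          _ = |γ| * (ω * s) := by
              rw [show ω * t - ω * t₀ = ω * s by rw [hsdef]; ring, abs_mul,
                abs_of_pos hω, abs_of_pos hs0]
      have h7 : (v₀ - c) * (s/2) ≤ (v₀ - c) * Real.sin s :=
        mul_le_mul_of_nonneg_left hsin' (by linarith)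
      have h8 : |A| * (1 - Real.cos s) ≤ |A| * s :=
        mul_le_mul_of_nonneg_left hcos (abs_nonneg A)
      have hco : |A| + |γ| * ω + 1 ≤ (v₀ - c) / 2 := by
        linarith [hXω, hXdef, mul_nonneg (abs_nonneg A) hω.le,
          mul_nonneg (abs_nonneg γ) hω.le, mul_nonneg (abs_nonneg σ) hω.le,
          abs_nonneg A, abs_nonneg γ, abs_nonneg σ, hvc1]
      linarith [hxe, hb1, h8, hb2, hb3, h7,
        mul_le_mul_of_nonneg_right hco hs0.le, hs0]
    · -- large s
      have hy2 : π - s ≤ π/2 := by linarith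
      have hj : 2/π * (π - s) ≤ Real.sin (π - s) := Real.mul_le_sin (by linarith) hy2
      have hπ0 : (0:ℝ) < π := by linarith
      have hsin' : 1/4 ≤ Real.sin s := by
        rw [← Real.sin_pi_sub s]
        have h1 : 2/π * (1/2) ≤ 2/π * (π - s) := by
          apply mul_le_mul_of_nonneg_left (by linarith) (by positivity)
        have h2 : (1:ℝ)/4 ≤ 2/π * (1/2) := by
          rw [div_mul_eq_mul_div, div_le_div_iff₀ (by norm_num) hπ0]
          nlinarith
        linarith
      have hcos2 : 1 - Real.cos s ≤ 2 := by linarith [Real.neg_one_le_cos s]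
      have hb2 : γ * (Real.cos (ω * t) - Real.cos (ω * t₀)) ≤ |γ| * 2 := by
        have hd : |Real.cos (ω * t) - Real.cos (ω * t₀)| ≤ 2 := by
          rw [abs_le]
          constructor <;>
            linarith [Real.neg_one_le_cos (ω * t), Real.cos_le_one (ω * t),
              Real.neg_one_le_cos (ω * t₀), Real.cos_le_one (ω * t₀)]
        calc γ * (Real.cos (ω * t) - Real.cos (ω * t₀))
            ≤ |γ * (Real.cos (ω * t) - Real.cos (ω * t₀))| := le_abs_self _
          _ = |γ| * |Real.cos (ω * t) - Real.cos (ω * t₀)| := abs_mul _ _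
          _ ≤ |γ| * 2 := mul_le_mul_of_nonneg_left hd (abs_nonneg γ)
      have h8 : |A| * (1 - Real.cos s) ≤ |A| * 2 :=
        mul_le_mul_of_nonneg_left hcos2 (abs_nonneg A)
      have h7 : (v₀ - c) * (1/4) ≤ (v₀ - c) * Real.sin s :=
        mul_le_mul_of_nonneg_left hsin' (by linarith)
      linarith [hxe, h8, hb2, hb3, h7, hXdef, hvc1,
        mul_nonneg hX0 hω.le, abs_nonneg A, abs_nonneg γ, abs_nonneg σ]
  -- key: location of the first impact and the impact equation
  have hkey : ∀ v₀, V ≤ v₀ → t₀ + π - 1/2 ≤ t₁ v₀ ∧ t₁ v₀ ≤ t₀ + π + 1/2 ∧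
      x v₀ (t₁ v₀) = σ := by
    intro v₀ hv
    obtain ⟨hvc1, hvc2, _⟩ := hvc v₀ hv
    have ha : x v₀ (t₀ + π - 1/2) < σ := hneg v₀ hv _ (by linarith) (by linarith)
    have hb : σ < x v₀ (t₀ + π + 1/2) := by
      have hx' := hx v₀ (t₀ + π + 1/2)
      rw [show t₀ + π + 1/2 - t₀ = 1/2 + π by ring, Real.cos_add_pi, Real.sin_add_pi] at hx'
      have h1 : (1:ℝ)/4 ≤ Real.sin (1/2) := by
        have hj := Real.mul_le_sin (by norm_num : (0:ℝ) ≤ 1/2) (by linarith : (1:ℝ)/2 ≤ π/2)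
        have h2 : (1:ℝ)/4 ≤ 2/π * (1/2) := by
          rw [div_mul_eq_mul_div, div_le_div_iff₀ (by norm_num) (by linarith : (0:ℝ) < π)]
          nlinarith
        linarith
      have h2 : -v₀ + D ≤ -(v₀ - c) := by linarith [(abs_le.mp hD).2]
      have h3 : (v₀ - c) * (1/4) ≤ (-(-v₀ + D)) * Real.sin (1/2) := by
        apply mul_le_mul (by linarith) h1 (by norm_num) (by linarith)
      have hA1 : -|A| ≤ A * -Real.cos (1/2) := by
        have := abs_mul A (-Real.cos (1/2))
        have h5 : |(-Real.cos (1/2) : ℝ)| ≤ 1 := by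
          rw [abs_neg]; exact Real.abs_cos_le_one _
        nlinarith [neg_abs_le (A * -Real.cos (1/2)), abs_nonneg A]
      have hg1 : -|γ| ≤ γ * Real.cos (ω * (t₀ + π + 1/2)) := by
        have := abs_mul γ (Real.cos (ω * (t₀ + π + 1/2)))
        have h5 := Real.abs_cos_le_one (ω * (t₀ + π + 1/2))
        nlinarith [neg_abs_le (γ * Real.cos (ω * (t₀ + π + 1/2))), abs_nonneg γ]
      have hσ1 : -|σ| ≤ -σ := by linarith [le_abs_self σ]
      rw [hx']
      nlinarith [mul_nonneg hX0 hω.le, hA1, hg1, hσ1, h3, hvc1, hXdef,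
        abs_nonneg A, abs_nonneg γ, abs_nonneg σ, le_abs_self σ]
    obtain ⟨t', ht'mem, ht'eq⟩ := intermediate_value_Icc
      (by linarith : t₀ + π - 1/2 ≤ t₀ + π + 1/2) (hcont v₀).continuousOn ⟨ha.le, hb.le⟩
    have ht'S : t' ∈ {t : ℝ | t₀ < t ∧ x v₀ t = σ} :=
      ⟨by linarith [(Set.mem_Icc.mp ht'mem).1], ht'eq⟩
    have hlb : ∀ u ∈ {t : ℝ | t₀ < t ∧ x v₀ t = σ}, t₀ + π - 1/2 ≤ u := by
      intro u hu
      by_contra hcon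
      push_neg at hcon
      exact absurd hu.2 (ne_of_lt (hneg v₀ hv u hu.1 hcon.le))
    have hbdd : BddBelow {t : ℝ | t₀ < t ∧ x v₀ t = σ} := ⟨t₀ + π - 1/2, hlb⟩
    have hne : Set.Nonempty {t : ℝ | t₀ < t ∧ x v₀ t = σ} := ⟨t', ht'S⟩
    have hSeq : {t : ℝ | t₀ < t ∧ x v₀ t = σ} =
        {u : ℝ | t₀ + π - 1/2 ≤ u ∧ x v₀ u = σ} := by
      ext u
      constructor
      · intro hu; exact ⟨hlb u hu, hu.2⟩
      · intro hu; exact ⟨by have := hu.1; linarith, hu.2⟩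
    have hclosed : IsClosed {u : ℝ | t₀ + π - 1/2 ≤ u ∧ x v₀ u = σ} := by
      have heq2 : {u : ℝ | t₀ + π - 1/2 ≤ u ∧ x v₀ u = σ} =
          Set.Ici (t₀ + π - 1/2) ∩ x v₀ ⁻¹' {σ} := by
        ext u; simp [Set.mem_Ici]
      rw [heq2]
      exact isClosed_Ici.inter (isClosed_singleton.preimage (hcont v₀))
    have hinf_mem : sInf {t : ℝ | t₀ < t ∧ x v₀ t = σ} ∈ {t : ℝ | t₀ < t ∧ x v₀ t = σ} := by
      rw [hSeq]
      exact hclosed.csInf_mem (hSeq ▸ hne) (hSeq ▸ hbdd)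
    have hup : sInf {t : ℝ | t₀ < t ∧ x v₀ t = σ} ≤ t' := csInf_le hbdd ht'S
    refine ⟨?_, ?_, ?_⟩
    · rw [ht₁ v₀]; exact hlb _ hinf_mem
    · rw [ht₁ v₀]; linarith [hup, (Set.mem_Icc.mp ht'mem).2]
    · rw [ht₁ v₀]; exact hinf_mem.2
  -- quantitative bound on the velocity change error
  have hEbound : ∀ v₀, V ≤ v₀ → |xd v₀ (t₁ v₀) - v₀ - f t₀| ≤
      ((|A| + c * ω + π/2 * X) * (π/2 * X)) / (v₀ - c) := by
    intro v₀ hv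
    obtain ⟨hvc1, hP, hv3⟩ := hvc v₀ hv
    obtain ⟨hk1, hk2, hk3⟩ := hkey v₀ hv
    obtain ⟨s, hsdef⟩ : ∃ s : ℝ, s = t₁ v₀ - (t₀ + π) := ⟨_, rfl⟩
    have hs : |s| ≤ 1/2 := abs_le.mpr ⟨by rw [hsdef]; linarith, by rw [hsdef]; linarith⟩
    have heq := hk3
    rw [hx v₀ (t₁ v₀), show t₁ v₀ - t₀ = s + π by rw [hsdef]; ring,
      Real.cos_add_pi, Real.sin_add_pi] at heq
    have h1 : (v₀ - D) * Real.sin s = σ + A * Real.cos s - γ * Real.cos (ω * t₁ v₀) := by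
      linear_combination heq
    have hsin_b : (v₀ - c) * |Real.sin s| ≤ X := by
      have h2 : |σ + A * Real.cos s - γ * Real.cos (ω * t₁ v₀)| ≤ X := by
        have ha1 : |σ + A * Real.cos s - γ * Real.cos (ω * t₁ v₀)|
            ≤ |σ| + |A * Real.cos s| + |γ * Real.cos (ω * t₁ v₀)| := by
          calc |σ + A * Real.cos s - γ * Real.cos (ω * t₁ v₀)|
              ≤ |σ + A * Real.cos s| + |γ * Real.cos (ω * t₁ v₀)| := abs_sub _ _
            _ ≤ |σ| + |A * Real.cos s| + |γ * Real.cos (ω * t₁ v₀)| := by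
                linarith [abs_add_le σ (A * Real.cos s)]
        have hb1 : |A * Real.cos s| ≤ |A| := by
          rw [abs_mul]
          nlinarith [Real.abs_cos_le_one s, abs_nonneg A]
        have hb2 : |γ * Real.cos (ω * t₁ v₀)| ≤ |γ| := by
          rw [abs_mul]
          nlinarith [Real.abs_cos_le_one (ω * t₁ v₀), abs_nonneg γ]
        rw [hXdef]; linarith
      have h4 : v₀ - c ≤ v₀ - D := by linarith [(abs_le.mp hD).2]
      calc (v₀ - c) * |Real.sin s| ≤ (v₀ - D) * |Real.sin s| :=
            mul_le_mul_of_nonneg_right h4 (abs_nonneg _)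
        _ = |(v₀ - D) * Real.sin s| := by
            rw [abs_mul, abs_of_nonneg (by linarith : (0:ℝ) ≤ v₀ - D)]
        _ = |σ + A * Real.cos s - γ * Real.cos (ω * t₁ v₀)| := by rw [h1]
        _ ≤ X := h2
    have hss : (v₀ - c) * |s| ≤ π/2 * X := by
      have h5 : |s| ≤ π/2 * |Real.sin s| :=
        abs_le_pi_div_two_mul_abs_sin' (by linarith : |s| ≤ π/2)
      calc (v₀ - c) * |s| ≤ (v₀ - c) * (π/2 * |Real.sin s|) :=
            mul_le_mul_of_nonneg_left h5 hP.le
        _ = π/2 * ((v₀ - c) * |Real.sin s|) := by ring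
        _ ≤ π/2 * X := by
            apply mul_le_mul_of_nonneg_left hsin_b (by positivity)
    have hE : xd v₀ (t₁ v₀) - v₀ - f t₀ =
        A * Real.sin s + (v₀ - D) * (Real.cos s - 1)
          + ω * γ * (Real.sin (ω * (t₀ + π)) - Real.sin (ω * t₁ v₀)) := by
      rw [hxdEq v₀ (t₁ v₀), hf t₀, show t₁ v₀ - t₀ = s + π by rw [hsdef]; ring,
        Real.cos_add_pi, Real.sin_add_pi, hDdef]
      ring
    have e1 : |A * Real.sin s| ≤ |A| * |s| := by
      rw [abs_mul]
      exact mul_le_mul_of_nonneg_left Real.abs_sin_le_abs (abs_nonneg A)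
    have e2 : |(v₀ - D) * (Real.cos s - 1)| ≤ (v₀ + c) * (s^2/2) := by
      rw [abs_mul]
      have hc1 : |Real.cos s - 1| ≤ s^2/2 := by
        rw [abs_of_nonpos (by linarith [Real.cos_le_one s])]
        have := Real.one_sub_sq_div_two_le_cos (x := s)
        linarith
      have hvD : |v₀ - D| ≤ v₀ + c := by
        rw [abs_of_nonneg (by linarith [(abs_le.mp hD).2] : (0:ℝ) ≤ v₀ - D)]
        linarith [(abs_le.mp hD).1]
      exact mul_le_mul hvD hc1 (abs_nonneg _) (by linarith)
    have e3 : |ω * γ * (Real.sin (ω * (t₀ + π)) - Real.sin (ω * t₁ v₀))| ≤ c * (ω * |s|) := by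
      rw [abs_mul]
      have h6 : |Real.sin (ω * (t₀ + π)) - Real.sin (ω * t₁ v₀)| ≤
          |ω * (t₀ + π) - ω * t₁ v₀| := abs_sin_sub_sin_le' _ _
      have h7 : |ω * (t₀ + π) - ω * t₁ v₀| = ω * |s| := by
        rw [show ω * (t₀ + π) - ω * t₁ v₀ = ω * (-s) by rw [hsdef]; ring, abs_mul,
          abs_of_pos hω, abs_neg]
      have h8 : |ω * γ| = c := by rw [hcdef, abs_mul, abs_of_pos hω]
      rw [h8]
      exact mul_le_mul_of_nonneg_left (h6.trans (le_of_eq h7)) hc0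
    rw [hE, le_div_iff₀ hP]
    have etot : |A * Real.sin s + (v₀ - D) * (Real.cos s - 1)
        + ω * γ * (Real.sin (ω * (t₀ + π)) - Real.sin (ω * t₁ v₀))| ≤
        |A| * |s| + (v₀ + c) * (s^2/2) + c * (ω * |s|) := by
      calc |A * Real.sin s + (v₀ - D) * (Real.cos s - 1)
          + ω * γ * (Real.sin (ω * (t₀ + π)) - Real.sin (ω * t₁ v₀))|
          ≤ |A * Real.sin s + (v₀ - D) * (Real.cos s - 1)|
            + |ω * γ * (Real.sin (ω * (t₀ + π)) - Real.sin (ω * t₁ v₀))| := abs_add_le _ _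
        _ ≤ |A * Real.sin s| + |(v₀ - D) * (Real.cos s - 1)|
            + |ω * γ * (Real.sin (ω * (t₀ + π)) - Real.sin (ω * t₁ v₀))| := by
            linarith [abs_add_le (A * Real.sin s) ((v₀ - D) * (Real.cos s - 1))]
        _ ≤ _ := by linarith
    have hs2 : s^2 = |s| * |s| := by rw [← sq_abs]; ring
    have h10 : ((v₀ - c) * |s|) * ((v₀ - c) * |s|) ≤ (π/2 * X) * (π/2 * X) :=
      mul_le_mul hss hss (by positivity) (by positivity)
    have h11 := mul_le_mul_of_nonneg_right etot hP.le
    have k1 : |A| * |s| * (v₀ - c) ≤ |A| * (π/2 * X) := by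
      calc |A| * |s| * (v₀ - c) = |A| * ((v₀ - c) * |s|) := by ring
        _ ≤ |A| * (π/2 * X) := mul_le_mul_of_nonneg_left hss (abs_nonneg A)
    have k3 : c * (ω * |s|) * (v₀ - c) ≤ c * ω * (π/2 * X) := by
      calc c * (ω * |s|) * (v₀ - c) = c * ω * ((v₀ - c) * |s|) := by ring
        _ ≤ c * ω * (π/2 * X) :=
            mul_le_mul_of_nonneg_left hss (mul_nonneg hc0 hω.le)
    have k2 : (v₀ + c) * (s^2/2) * (v₀ - c) ≤ (π/2 * X) * (π/2 * X) := by
      have h12 : (v₀ + c) * (s^2/2) * (v₀ - c) ≤ (v₀ - c) * s^2 * (v₀ - c) := by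
        nlinarith [mul_nonneg (sq_nonneg s) hP.le, hv3]
      calc (v₀ + c) * (s^2/2) * (v₀ - c) ≤ (v₀ - c) * s^2 * (v₀ - c) := h12
        _ = ((v₀ - c) * |s|) * ((v₀ - c) * |s|) := by rw [hs2]; ring
        _ ≤ (π/2 * X) * (π/2 * X) := h10
    calc |A * Real.sin s + (v₀ - D) * (Real.cos s - 1)
        + ω * γ * (Real.sin (ω * (t₀ + π)) - Real.sin (ω * t₁ v₀))| * (v₀ - c)
        ≤ (|A| * |s| + (v₀ + c) * (s^2/2) + c * (ω * |s|)) * (v₀ - c) := h11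
      _ = |A| * |s| * (v₀ - c) + (v₀ + c) * (s^2/2) * (v₀ - c)
          + c * (ω * |s|) * (v₀ - c) := by ring
      _ ≤ |A| * (π/2 * X) + (π/2 * X) * (π/2 * X) + c * ω * (π/2 * X) := by
          linarith [k1, k2, k3]
      _ = (|A| + c * ω + π/2 * X) * (π/2 * X) := by ring
  -- conclude
  have htend : Filter.Tendsto
      (fun v₀ : ℝ => ((|A| + c * ω + π/2 * X) * (π/2 * X)) / (v₀ - c))
      Filter.atTop (nhds 0) := by
    have h1 : Filter.Tendsto (fun v₀ : ℝ => v₀ - c) Filter.atTop Filter.atTop := by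
      simpa [sub_eq_add_neg] using
        Filter.tendsto_atTop_add_const_right Filter.atTop (-c) Filter.tendsto_id
    have h2 := h1.inv_tendsto_atTop
    have h3 := h2.const_mul ((|A| + c * ω + π/2 * X) * (π/2 * X))
    simpa [div_eq_mul_inv] using h3
  have h0 : Filter.Tendsto (fun v₀ => xd v₀ (t₁ v₀) - v₀ - f t₀)
      Filter.atTop (nhds 0) := by
    apply squeeze_zero_norm' _ htend
    filter_upwards [Filter.eventually_ge_atTop V] with v₀ hv
    simpa [Real.norm_eq_abs] using hEbound v₀ hv
  have h1 := h0.add_const (f t₀)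
  simpa using h1
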